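/- Almost surely, the set {k ∈ ℕ : t_k ∉ A} is infinite; equivalently, for every M ∈ ℕ, P[#{k ∈ ℕ : t_k ∉ A} ≥ M] = 1. (Paper's Proposition 3: under deterministic jamming attacks satisfying the duration condition, each agent makes infinitely many successful communication attempts with probability one.) -/

import Mathlib

open MeasureTheory
open scoped ENNReal

/-- Paper's Proposition 3: under deterministic jamming attacks satisfying the
average-duration condition with `ρ < 1`, the independent uniformly-randomized
communication attempt times `t k` avoid the attack set `A` infinitely often, almost surely. -/
theorem stmt2 (κ ρ : ℝ) (hκ : 0 ≤ κ) (hρ0 : 0 < ρ) (hρ1 : ρ < 1)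
    (A : Set ℝ) (hA : MeasurableSet A)
    (hdur : ∀ τ t : ℝ, 0 ≤ τ → τ ≤ t →
      volume (A ∩ Set.Icc τ t) ≤ ENNReal.ofReal (κ + ρ * (t - τ)))
    {Ω : Type*} [MeasurableSpace Ω] (P : Measure Ω) [IsProbabilityMeasure P]
    (Δ : ℝ) (hΔ : 0 < Δ)
    (t : ℕ → Ω → ℝ) (hmeas : ∀ k, Measurable (t k))
    (hindep : ProbabilityTheory.iIndepFun t P)
    (hlaw : ∀ k : ℕ, Measure.map (t k) P
      = (ENNReal.ofReal Δ)⁻¹ • volume.restrict (Set.Ico ((k : ℝ) * Δ) (((k : ℝ) + 1) * Δ))) :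
    P {ω | {k : ℕ | t k ω ∉ A}.Infinite} = 1 := by
  classical
  set s : ℕ → Set Ω := fun k => (t k) ⁻¹' Aᶜ with hs_def
  have hsm : ∀ k, MeasurableSet (s k) := fun k => (hmeas k) hA.compl
  have hindepS : ProbabilityTheory.iIndepSet s P := by
    rw [ProbabilityTheory.iIndepSet_iff_meas_biInter hsm]
    intro S
    exact hindep.meas_biInter (fun i _ => ⟨Aᶜ, hA.compl, rfl⟩)
  -- probability of hitting A in step k
  have hIk : ∀ k : ℕ, P ((t k) ⁻¹' A)
      = (ENNReal.ofReal Δ)⁻¹ * volume (A ∩ Set.Ico ((k : ℝ) * Δ) (((k : ℝ) + 1) * Δ)) := by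
    intro k
    rw [← Measure.map_apply (hmeas k) hA, hlaw k]
    rw [Measure.smul_apply, Measure.restrict_apply hA, smul_eq_mul]
  -- sum of attack probabilities over a block
  have hsum : ∀ N : ℕ,
      ∑ k ∈ Finset.range N, P ((t k) ⁻¹' A) ≤ ENNReal.ofReal ((κ + ρ * (N * Δ)) / Δ) := by
    intro N
    have hdisj : (↑(Finset.range N) : Set ℕ).PairwiseDisjoint
        (fun k : ℕ => A ∩ Set.Ico ((k : ℝ) * Δ) (((k : ℝ) + 1) * Δ)) := by
      intro i _ j _ hij
      refine Set.disjoint_of_subset Set.inter_subset_right Set.inter_subset_right ?_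
      rw [Set.Ico_disjoint_Ico]
      rcases hij.lt_or_gt with h | h
      · have : ((i : ℝ) + 1) * Δ ≤ (j : ℝ) * Δ := by
          apply mul_le_mul_of_nonneg_right _ hΔ.le
          exact_mod_cast h
        calc min (((i : ℝ) + 1) * Δ) (((j : ℝ) + 1) * Δ) ≤ ((i : ℝ) + 1) * Δ := min_le_left _ _
          _ ≤ (j : ℝ) * Δ := this
          _ ≤ max ((i : ℝ) * Δ) ((j : ℝ) * Δ) := le_max_right _ _
      · have : ((j : ℝ) + 1) * Δ ≤ (i : ℝ) * Δ := by
          apply mul_le_mul_of_nonneg_right _ hΔ.le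
          exact_mod_cast h
        calc min (((i : ℝ) + 1) * Δ) (((j : ℝ) + 1) * Δ) ≤ ((j : ℝ) + 1) * Δ := min_le_right _ _
          _ ≤ (i : ℝ) * Δ := this
          _ ≤ max ((i : ℝ) * Δ) ((j : ℝ) * Δ) := le_max_left _ _
    have hmeasI : ∀ k ∈ Finset.range N,
        MeasurableSet (A ∩ Set.Ico ((k : ℝ) * Δ) (((k : ℝ) + 1) * Δ)) :=
      fun k _ => hA.inter measurableSet_Ico
    have hunion : (⋃ k ∈ Finset.range N, A ∩ Set.Ico ((k : ℝ) * Δ) (((k : ℝ) + 1) * Δ))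
        ⊆ A ∩ Set.Icc 0 ((N : ℝ) * Δ) := by
      intro x hx
      simp only [Set.mem_iUnion, Finset.mem_range] at hx
      obtain ⟨k, hk, hxA, hxI⟩ := hx
      refine ⟨hxA, ?_, ?_⟩
      · exact le_trans (by positivity) hxI.1
      · refine le_trans hxI.2.le ?_
        apply mul_le_mul_of_nonneg_right _ hΔ.le
        exact_mod_cast Nat.succ_le_of_lt hk
    have hvsum : ∑ k ∈ Finset.range N, volume (A ∩ Set.Ico ((k : ℝ) * Δ) (((k : ℝ) + 1) * Δ))
        ≤ ENNReal.ofReal (κ + ρ * ((N : ℝ) * Δ)) := by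
      rw [← measure_biUnion_finset hdisj hmeasI]
      calc volume (⋃ k ∈ Finset.range N, A ∩ Set.Ico ((k : ℝ) * Δ) (((k : ℝ) + 1) * Δ))
          ≤ volume (A ∩ Set.Icc 0 ((N : ℝ) * Δ)) := measure_mono hunion
        _ ≤ ENNReal.ofReal (κ + ρ * ((N : ℝ) * Δ - 0)) := hdur 0 ((N : ℝ) * Δ) le_rfl (by positivity)
        _ = ENNReal.ofReal (κ + ρ * ((N : ℝ) * Δ)) := by ring_nf
    calc ∑ k ∈ Finset.range N, P ((t k) ⁻¹' A)
        = (ENNReal.ofReal Δ)⁻¹ * ∑ k ∈ Finset.range N,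
            volume (A ∩ Set.Ico ((k : ℝ) * Δ) (((k : ℝ) + 1) * Δ)) := by
          rw [Finset.mul_sum]; exact Finset.sum_congr rfl fun k _ => hIk k
      _ ≤ (ENNReal.ofReal Δ)⁻¹ * ENNReal.ofReal (κ + ρ * ((N : ℝ) * Δ)) :=
          mul_le_mul_right hvsum _
      _ = ENNReal.ofReal ((κ + ρ * (N * Δ)) / Δ) := by
          rw [div_eq_mul_inv, ENNReal.ofReal_mul (by positivity),
            ENNReal.ofReal_inv_of_pos hΔ, mul_comm]
  -- divergence of the sum of success probabilities
  have htsum : (∑' k, P (s k)) = ∞ := by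
    by_contra hfin
    have hCfin : (∑' k, P (s k)) ≠ ∞ := hfin
    set C : ℝ := (∑' k, P (s k)).toReal with hC
    -- for each N, N ≤ bound + partial sum
    have hkey : ∀ N : ℕ, (N : ℝ) ≤ (κ + ρ * (N * Δ)) / Δ + C := by
      intro N
      have h1 : ∀ k, P ((t k) ⁻¹' A) + P (s k) = 1 := by
        intro k
        have := measure_add_measure_compl (μ := P) ((hmeas k) hA)
        simpa [s, Set.preimage_compl] using this
      have h2 : ((N : ℝ≥0∞)) = ∑ k ∈ Finset.range N, (P ((t k) ⁻¹' A) + P (s k)) := by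
        simp [h1]
      have h3 : ((N : ℝ≥0∞)) ≤ ENNReal.ofReal ((κ + ρ * (N * Δ)) / Δ) + ∑' k, P (s k) := by
        rw [h2, Finset.sum_add_distrib]
        exact add_le_add (hsum N) (ENNReal.sum_le_tsum _)
      have h4 : ((N : ℝ≥0∞)) ≤ ENNReal.ofReal ((κ + ρ * (N * Δ)) / Δ + C) := by
        rw [ENNReal.ofReal_add (by positivity) ENNReal.toReal_nonneg]
        exact h3.trans (add_le_add_right (ENNReal.ofReal_toReal hCfin).ge _)
      have := (ENNReal.le_ofReal_iff_toReal_le (by simp) (by positivity)).mp h4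
      simpa using this
    -- contradiction with ρ < 1
    obtain ⟨N, hN⟩ := exists_nat_gt ((κ / Δ + C) / (1 - ρ))
    have h5 := hkey N
    have h6 : (κ + ρ * (N * Δ)) / Δ = κ / Δ + ρ * N := by
      field_simp
    rw [h6] at h5
    have h7 : (N : ℝ) * (1 - ρ) ≤ κ / Δ + C := by nlinarith
    have h8 : (N : ℝ) ≤ (κ / Δ + C) / (1 - ρ) := by
      rw [le_div_iff₀ (by linarith)]
      linarith
    linarith
  -- second Borel–Cantelli
  have hlimsup := ProbabilityTheory.measure_limsup_eq_one hsm hindepS htsum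
  have hset : {ω | {k : ℕ | t k ω ∉ A}.Infinite} = Filter.limsup s Filter.atTop := by
    ext ω
    rw [Set.mem_setOf_eq, ← Nat.frequently_atTop_iff_infinite,
      Filter.mem_limsup_iff_frequently_mem]
    rfl
  rw [hset]
  exact hlimsup
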